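/- Let x_A, x_B be reals with 0 < x_A < x_B < 1. For each N ∈ ℕ define the binomial weights p^N_k(x) = C(N,k)·x^k·(1−x)^{N−k} for k = 0,…,N, and let k*_N be the least k ∈ {0,…,N} with Σ_{j=0}^{k} (p^N_j(x_A) + p^N_j(x_B)) > 1. Then (k*_N : ℝ)/N → x₀* as N → ∞, where x₀* = log((1−x_A)/(1−x_B)) / log(((1−x_A)·x_B)/((1−x_B)·x_A)). -/

import Mathlib

private lemma aux_geom (g : ℕ → ℝ) (q : ℝ) (hq0 : 0 ≤ q) (hq1 : q < 1) (n : ℕ)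
    (h0 : 0 ≤ g 0) (hg : ∀ j, j + 1 < n → g (j+1) ≤ q * g j) :
    ∑ j ∈ Finset.range n, g j ≤ g 0 / (1 - q) := by
  have hbd : ∀ j, j < n → g j ≤ q ^ j * g 0 := by
    intro j
    induction j with
    | zero => intro _; simp
    | succ i ih =>
      intro hin
      calc g (i+1) ≤ q * g i := hg i hin
        _ ≤ q * (q ^ i * g 0) := mul_le_mul_of_nonneg_left (ih (by omega)) hq0
        _ = q ^ (i+1) * g 0 := by ring
  have hgeo : ∑ j ∈ Finset.range n, q ^ j ≤ 1 / (1 - q) := by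
    have h1 : ∑ j ∈ Finset.range n, q ^ j = (1 - q ^ n) / (1 - q) := by
      rw [geom_sum_eq (by linarith : q ≠ 1)]
      rw [div_eq_div_iff (by linarith) (by linarith)]
      ring
    have h2 : (0:ℝ) ≤ q ^ n := pow_nonneg hq0 n
    rw [h1, div_le_div_iff₀ (by linarith) (by linarith)]
    nlinarith
  calc ∑ j ∈ Finset.range n, g j ≤ ∑ j ∈ Finset.range n, q ^ j * g 0 := by
        apply Finset.sum_le_sum
        intro j hj
        exact hbd j (Finset.mem_range.mp hj)
    _ = (∑ j ∈ Finset.range n, q ^ j) * g 0 := by rw [Finset.sum_mul]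
    _ ≤ (1 / (1 - q)) * g 0 := mul_le_mul_of_nonneg_right hgeo h0
    _ = g 0 / (1 - q) := by ring

private lemma aux_gibbs {p q : ℝ} (hp0 : 0 < p) (hp1 : p < 1) (hq0 : 0 < q) (hq1 : q < 1)
    (hne : p ≠ q) : 0 < p * (Real.log p - Real.log q) + (1-p) * (Real.log (1-p) - Real.log (1-q)) := by
  have h1 : Real.log (q/p) < q/p - 1 := by
    apply Real.log_lt_sub_one_of_pos (div_pos hq0 hp0)
    intro h
    exact hne ((div_eq_one_iff_eq (ne_of_gt hp0)).mp h).symm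
  have h2 : Real.log ((1-q)/(1-p)) < (1-q)/(1-p) - 1 := by
    apply Real.log_lt_sub_one_of_pos (div_pos (by linarith) (by linarith))
    intro h
    have := (div_eq_one_iff_eq (by linarith : (1:ℝ)-p ≠ 0)).mp h
    exact hne (by linarith)
  rw [Real.log_div (ne_of_gt hq0) (ne_of_gt hp0)] at h1
  rw [Real.log_div (by linarith : (1:ℝ)-q ≠ 0) (by linarith : (1:ℝ)-p ≠ 0)] at h2
  have e1 : p * (q/p - 1) = q - p := by field_simp
  have e2 : (1-p) * ((1-q)/(1-p) - 1) = p - q := by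
    rw [mul_sub, mul_one, mul_div_cancel₀ _ (by linarith : (1:ℝ)-p ≠ 0)]
    ring
  nlinarith [mul_lt_mul_of_pos_left h1 hp0, mul_lt_mul_of_pos_left h2 (by linarith : (0:ℝ) < 1 - p)]

private lemma aux_step (x : ℝ) (hx0 : 0 < x) (hx1 : x < 1) (N k : ℕ) (hk : k < N) :
    (N.choose (k+1) : ℝ) * x^(k+1) * (1-x)^(N-(k+1))
      = ((N.choose k : ℝ) * x^k * (1-x)^(N-k)) * ((((N:ℝ)-(k:ℝ))/((k:ℝ)+1)) * (x/(1-x))) := by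
  have h := Nat.choose_succ_right_eq N k
  have h1 : ((N.choose (k+1)) : ℝ) * ((k:ℝ)+1) = (N.choose k : ℝ) * ((N:ℝ) - (k:ℝ)) := by
    have h' : ((N.choose (k+1) * (k+1) : ℕ) : ℝ) = ((N.choose k * (N - k) : ℕ) : ℝ) := by
      exact_mod_cast congrArg (Nat.cast : ℕ → ℝ) h
    rw [Nat.cast_mul, Nat.cast_mul, Nat.cast_sub hk.le] at h'
    push_cast at h' ⊢
    linarith
  have h2 : (1-x)^(N-k) = (1-x)^(N-(k+1)) * (1-x) := by
    have hnk : N - k = (N - (k+1)) + 1 := by omega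
    rw [hnk, pow_succ]
  rw [h2]
  have hx1' : (1:ℝ) - x ≠ 0 := by linarith
  have hk1 : ((k:ℝ)+1) ≠ 0 := by positivity
  rw [div_mul_div_comm, mul_div_assoc', eq_div_iff (mul_ne_zero hk1 hx1')]
  linear_combination (x^(k+1) * (1-x)^(N-(k+1)) * (1-x)) * h1

private lemma aux_sum_one (x : ℝ) (N : ℕ) :
    ∑ k ∈ Finset.range (N+1), (N.choose k : ℝ) * x^k * (1-x)^(N-k) = 1 := by
  calc ∑ k ∈ Finset.range (N+1), (N.choose k:ℝ) * x^k * (1-x)^(N-k)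
      = ∑ k ∈ Finset.range (N+1), x^k * (1-x)^(N-k) * (N.choose k:ℝ) := by
        exact Finset.sum_congr rfl fun k _ => by ring
    _ = (x + (1-x))^N := (add_pow x (1-x) N).symm
    _ = 1 := by norm_num

private lemma aux_tilt (xA xB : ℝ) (h1 : 0 < xA) (h2 : xA < xB) (h3 : xB < 1)
    (N k : ℕ) (hk : k ≤ N) :
    (N.choose k : ℝ) * xA^k * (1-xA)^(N-k)
      = Real.exp (((N:ℝ) - (k:ℝ)) * Real.log ((1-xA)/(1-xB)) - (k:ℝ) * Real.log (xB/xA))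
        * ((N.choose k : ℝ) * xB^k * (1-xB)^(N-k)) := by
  have hxB0 : 0 < xB := h1.trans h2
  have hA1 : xA < 1 := h2.trans h3
  have hcA : (0:ℝ) < 1 - xA := by linarith
  have hcB : (0:ℝ) < 1 - xB := by linarith
  have hNk : ((N - k : ℕ) : ℝ) = (N:ℝ) - (k:ℝ) := by
    push_cast [Nat.cast_sub hk]; ring
  have hexp : Real.exp (((N:ℝ) - (k:ℝ)) * Real.log ((1-xA)/(1-xB)) - (k:ℝ) * Real.log (xB/xA))
      = ((1-xA)/(1-xB))^(N-k) * (xA/xB)^k := by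
    rw [Real.exp_sub, ← hNk, Real.exp_nat_mul, Real.exp_nat_mul,
      Real.exp_log (by positivity), Real.exp_log (by positivity),
      div_eq_mul_inv, ← inv_pow, inv_div]
  rw [hexp, div_pow, div_pow]
  have hxBne : xB ≠ 0 := ne_of_gt hxB0
  have hcBne : (1:ℝ) - xB ≠ 0 := ne_of_gt hcB
  field_simp

set_option maxHeartbeats 4000000 in
/-- Binomial Fisher limiting policy: the equilibrium threshold `k*_N` of the Binomial
Fisher game satisfies `k*_N / N → x₀* = log((1−x_A)/(1−x_B)) / log(((1−x_A)·x_B)/((1−x_B)·x_A))`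
as `N → ∞`. -/
theorem stmt_10 (xA xB : ℝ) (h1 : 0 < xA) (h2 : xA < xB) (h3 : xB < 1)
    (p : ℕ → ℝ → ℕ → ℝ)
    (hp : ∀ N x k, p N x k = (N.choose k : ℝ) * x ^ k * (1 - x) ^ (N - k))
    (kstar : ℕ → ℕ) (hks : ∀ N, kstar N ≤ N)
    (hgt : ∀ N, 1 < ∑ j ∈ Finset.range (kstar N + 1), (p N xA j + p N xB j))
    (hleast : ∀ N, ∀ k < kstar N, (∑ j ∈ Finset.range (k + 1), (p N xA j + p N xB j)) ≤ 1) :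
    Filter.Tendsto (fun N : ℕ => (kstar N : ℝ) / (N : ℝ)) Filter.atTop
      (nhds (Real.log ((1 - xA) / (1 - xB))
        / Real.log (((1 - xA) * xB) / ((1 - xB) * xA)))) := by
  have hxB0 : 0 < xB := h1.trans h2
  have hA1 : xA < 1 := h2.trans h3
  have hcA : (0:ℝ) < 1 - xA := by linarith
  have hcB : (0:ℝ) < 1 - xB := by linarith
  obtain ⟨a, ha_def⟩ : ∃ y, Real.log ((1 - xA) / (1 - xB)) = y := ⟨_, rfl⟩
  obtain ⟨b, hb_def⟩ : ∃ y, Real.log (xB / xA) = y := ⟨_, rfl⟩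
  have ha : 0 < a := ha_def ▸ Real.log_pos (by rw [lt_div_iff₀ hcB]; linarith)
  have hb : 0 < b := hb_def ▸ Real.log_pos (by rw [lt_div_iff₀ h1]; linarith)
  have hab : 0 < a + b := by linarith
  have haL : a = Real.log (1-xA) - Real.log (1-xB) := by
    rw [← ha_def]; exact Real.log_div hcA.ne' hcB.ne'
  have hbL : b = Real.log xB - Real.log xA := by
    rw [← hb_def]; exact Real.log_div hxB0.ne' h1.ne'
  have htgt : Real.log (((1 - xA) * xB) / ((1 - xB) * xA)) = a + b := by
    rw [show ((1 - xA) * xB) / ((1 - xB) * xA) = ((1-xA)/(1-xB)) * (xB/xA) by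
      field_simp]
    rw [Real.log_mul (div_pos hcA hcB).ne' (div_pos hxB0 h1).ne', ha_def, hb_def]
  rw [ha_def, htgt]
  set L := a / (a + b) with hL_def
  have hLab : L * (a+b) = a := div_mul_cancel₀ a hab.ne'
  have hLA : xA < L := by
    have hg := aux_gibbs h1 hA1 hxB0 h3 (ne_of_lt h2)
    have key : xA * (Real.log xA - Real.log xB) + (1-xA) * (Real.log (1-xA) - Real.log (1-xB))
        = (1-xA)*a - xA*b := by rw [haL, hbL]; ring
    rw [key] at hg
    rw [hL_def, lt_div_iff₀ hab]
    linarith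
  have hLB : L < xB := by
    have hg := aux_gibbs hxB0 h3 h1 hA1 (ne_of_gt h2)
    have key : xB * (Real.log xB - Real.log xA) + (1-xB) * (Real.log (1-xB) - Real.log (1-xA))
        = xB*b - (1-xB)*a := by rw [haL, hbL]; ring
    rw [key] at hg
    rw [hL_def, div_lt_iff₀ hab]
    linarith
  have hL0 : 0 < L := div_pos ha hab
  have hL1 : L < 1 := hLB.trans h3
  clear_value L
  rw [Metric.tendsto_atTop]
  intro ε hε
  set δ := min (ε/2) (min ((xB - L)/2) (L/2)) with hδ_def
  have hδ0 : 0 < δ := lt_min (by linarith) (lt_min (by linarith) (by linarith))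
  have hδε : δ ≤ ε/2 := min_le_left _ _
  have hδB : L + δ < xB := by
    have := (min_le_right (ε/2) _).trans (min_le_left ((xB - L)/2) (L/2))
    linarith
  have hδL : δ < L := by
    have := (min_le_right (ε/2) _).trans (min_le_right ((xB - L)/2) (L/2))
    linarith
  clear_value δ
  have hLδ1 : L + δ < 1 := by linarith
  have hLδ0 : 0 < L + δ := by linarith
  have hs0 : 0 < L - δ := by linarith
  have hs1 : L - δ < 1 := by linarith
  set q1 : ℝ := ((1 - (L+δ)) / (L+δ)) * (xA/(1-xA)) with hq1_def
  have hq10 : 0 < q1 := mul_pos (div_pos (by linarith) hLδ0) (div_pos h1 hcA)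
  have hq11 : q1 < 1 := by
    rw [hq1_def, div_mul_div_comm, div_lt_one (mul_pos hLδ0 hcA)]
    linarith
  clear_value q1
  set q2 : ℝ := ((L-δ) / (1-(L-δ))) * ((1-xB)/xB) with hq2_def
  have hq20 : 0 < q2 := mul_pos (div_pos hs0 (by linarith)) (div_pos hcB hxB0)
  have hq21 : q2 < 1 := by
    rw [hq2_def, div_mul_div_comm, div_lt_one (mul_pos (by linarith) hxB0)]
    linarith
  clear_value q2
  set c : ℝ := ((1-(L-δ))/((L-δ)+1)) * (xA/(1-xA)) with hc_def
  have hc0 : 0 < c := mul_pos (div_pos (by linarith) (by linarith)) (div_pos h1 hcA)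
  clear_value c
  have hq1' : (0:ℝ) < 1 - q1 := by linarith
  have hq2' : (0:ℝ) < 1 - q2 := by linarith
  obtain ⟨N₀, hN₀⟩ := exists_nat_gt (max (max (2/ε) (1/(1-(L-δ))))
    (max (q1/((1-q1)*((a+b)*δ))) (1/(c*(1-q2)*((a+b)*δ)))))
  refine ⟨N₀ + 1, fun n hn => ?_⟩
  have hn1 : 1 ≤ n := by omega
  have hnn : (max (max (2/ε) (1/(1-(L-δ)))) (max (q1/((1-q1)*((a+b)*δ))) (1/(c*(1-q2)*((a+b)*δ))))) < (n:ℝ) := by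
    refine lt_of_lt_of_le hN₀ ?_
    exact_mod_cast Nat.le_of_succ_le hn
  have hn0 : (0:ℝ) < n := by
    have : (1:ℝ) ≤ (n:ℝ) := by exact_mod_cast hn1
    linarith
  have hne2 : 2/ε < (n:ℝ) := lt_of_le_of_lt ((le_max_left _ _).trans (le_max_left _ _)) hnn
  have hnf : 1/(1-(L-δ)) < (n:ℝ) := lt_of_le_of_lt ((le_max_right _ _).trans (le_max_left _ _)) hnn
  have hnE1 : q1/((1-q1)*((a+b)*δ)) < (n:ℝ) := lt_of_le_of_lt ((le_max_left _ _).trans (le_max_right _ _)) hnn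
  have hnE2 : 1/(c*(1-q2)*((a+b)*δ)) < (n:ℝ) := lt_of_le_of_lt ((le_max_right _ _).trans (le_max_right _ _)) hnn
  have hy0 : 0 < (a+b)*δ*(n:ℝ) := mul_pos (mul_pos hab hδ0) hn0
  have hexpy : (a+b)*δ*(n:ℝ) < Real.exp ((a+b)*δ*(n:ℝ)) := by
    linarith [Real.add_one_le_exp ((a+b)*δ*(n:ℝ))]
  have hE1 : Real.exp (-((a+b)*δ*(n:ℝ))) < (1-q1)/q1 := by
    rw [div_lt_iff₀ (mul_pos hq1' (mul_pos hab hδ0))] at hnE1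
    have h' : q1/(1-q1) < Real.exp ((a+b)*δ*(n:ℝ)) := by
      rw [div_lt_iff₀ hq1']
      linarith [mul_lt_mul_of_pos_right hexpy hq1']
    rw [Real.exp_neg, ← one_div, div_lt_div_iff₀ (Real.exp_pos _) hq10]
    have := (div_lt_iff₀ hq1').mp h'
    linarith
  have hE2 : 1/(1-q2) ≤ c * Real.exp ((a+b)*δ*(n:ℝ)) := by
    rw [div_lt_iff₀ (mul_pos (mul_pos hc0 hq2') (mul_pos hab hδ0))] at hnE2
    rw [div_le_iff₀ hq2']
    linarith [mul_lt_mul_of_pos_left hexpy (mul_pos hc0 hq2')]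
  have hn1div : 1/(n:ℝ) < ε/2 := by
    rw [div_lt_iff₀ hε] at hne2
    rw [div_lt_div_iff₀ hn0 (by norm_num : (0:ℝ) < 2)]
    linarith
  have hfl : (L-δ)*(n:ℝ) ≤ (n:ℝ) - 1 := by
    rw [div_lt_iff₀ (by linarith : (0:ℝ) < 1-(L-δ))] at hnf
    linarith
  -- nonnegativity helpers
  have hpA_nn : ∀ j : ℕ, 0 ≤ (n.choose j : ℝ) * xA^j * (1-xA)^(n-j) := fun j =>
    mul_nonneg (mul_nonneg (Nat.cast_nonneg _) (pow_nonneg h1.le j)) (pow_nonneg hcA.le _)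
  have hpB_nn : ∀ j : ℕ, 0 ≤ (n.choose j : ℝ) * xB^j * (1-xB)^(n-j) := fun j =>
    mul_nonneg (mul_nonneg (Nat.cast_nonneg _) (pow_nonneg hxB0.le j)) (pow_nonneg hcB.le _)
  have hpB_pos : ∀ j : ℕ, j ≤ n → 0 < (n.choose j : ℝ) * xB^j * (1-xB)^(n-j) := fun j hj =>
    mul_pos (mul_pos (by exact_mod_cast Nat.choose_pos hj) (pow_pos hxB0 j)) (pow_pos hcB _)
  have hgtn := hgt n
  have hlen := hleast n
  simp only [hp] at hgtn hlen
  have hsplit : ∀ m : ℕ, m ≤ n →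
      (∑ j ∈ Finset.range (m+1), (n.choose j : ℝ) * xA^j * (1-xA)^(n-j))
      + (∑ j ∈ Finset.Ico (m+1) (n+1), (n.choose j : ℝ) * xA^j * (1-xA)^(n-j)) = 1 := by
    intro m hm
    rw [Finset.range_eq_Ico,
      Finset.sum_Ico_consecutive _ (Nat.zero_le _) (by omega : m+1 ≤ n+1),
      ← Finset.range_eq_Ico]
    exact aux_sum_one xA n
  -- Upper bound: kstar n < (L+δ)*n + 1
  have hup : (kstar n : ℝ) < (L+δ)*(n:ℝ) + 1 := by
    set m := ⌈(L+δ)*(n:ℝ)⌉₊ with hm_def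
    have hmn : m ≤ n := by
      rw [hm_def, Nat.ceil_le]
      linarith [mul_nonneg (by linarith : (0:ℝ) ≤ 1-(L+δ)) hn0.le]
    have hmge : (L+δ)*(n:ℝ) ≤ (m:ℝ) := Nat.le_ceil _
    have hmlt : (m:ℝ) < (L+δ)*(n:ℝ) + 1 := Nat.ceil_lt_add_one (mul_nonneg hLδ0.le hn0.le)
    clear_value m
    have hratio : ∀ k, m ≤ k →
        (n.choose (k+1) : ℝ) * xA^(k+1) * (1-xA)^(n-(k+1))
          ≤ q1 * ((n.choose k : ℝ) * xA^k * (1-xA)^(n-k)) := by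
      intro k hk
      rcases lt_or_ge k n with hkn | hkn
      · rw [aux_step xA h1 hA1 n k hkn, mul_comm q1 _]
        apply mul_le_mul_of_nonneg_left _ (hpA_nn k)
        rw [hq1_def]
        apply mul_le_mul_of_nonneg_right _ (div_pos h1 hcA).le
        rw [div_le_div_iff₀ (by positivity) hLδ0]
        have hkk : (m:ℝ) ≤ (k:ℝ) := by exact_mod_cast hk
        linarith [hmge, hLδ1]
      · have hz : n.choose (k+1) = 0 := Nat.choose_eq_zero_of_lt (by omega)
        rw [hz]
        simp only [Nat.cast_zero, zero_mul]
        exact mul_nonneg hq10.le (hpA_nn k)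
    have htail : (∑ k ∈ Finset.Ico (m+1) (n+1), (n.choose k : ℝ) * xA^k * (1-xA)^(n-k))
        ≤ (q1 * ((n.choose m : ℝ) * xA^m * (1-xA)^(n-m))) / (1 - q1) := by
      rw [Finset.sum_Ico_eq_sum_range]
      have hg := aux_geom (fun j => (n.choose (m+1+j) : ℝ) * xA^(m+1+j) * (1-xA)^(n-(m+1+j)))
        q1 hq10.le hq11 (n+1-(m+1)) (hpA_nn (m+1)) (fun j hj => hratio (m+1+j) (by omega))
      refine le_trans hg ?_
      exact (div_le_div_iff_of_pos_right hq1').mpr (hratio m le_rfl)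
    have htilt : (n.choose m : ℝ) * xA^m * (1-xA)^(n-m)
        ≤ Real.exp (-((a+b)*δ*(n:ℝ))) * ((n.choose m : ℝ) * xB^m * (1-xB)^(n-m)) := by
      rw [aux_tilt xA xB h1 h2 h3 n m hmn]
      apply mul_le_mul_of_nonneg_right _ (hpB_nn m)
      rw [Real.exp_le_exp, ha_def, hb_def]
      have hLabn : L*(a+b)*(n:ℝ) = a*(n:ℝ) := by rw [hLab]
      linarith [mul_le_mul_of_nonneg_left hmge hab.le, hLabn]
    have hpBm := hpB_pos m hmn
    have hfin : (q1 * ((n.choose m : ℝ) * xA^m * (1-xA)^(n-m))) / (1-q1)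
        < (n.choose m : ℝ) * xB^m * (1-xB)^(n-m) := by
      rw [div_lt_iff₀ hq1']
      have h1' : q1 * Real.exp (-((a+b)*δ*(n:ℝ))) < 1 - q1 := by
        have := (lt_div_iff₀ hq10).mp hE1
        linarith
      linarith [mul_le_mul_of_nonneg_left htilt hq10.le, mul_lt_mul_of_pos_right h1' hpBm]
    have hFB : (n.choose m:ℝ)*xB^m*(1-xB)^(n-m)
        ≤ ∑ j ∈ Finset.range (m+1), (n.choose j:ℝ)*xB^j*(1-xB)^(n-j) :=
      Finset.single_le_sum (fun i _ => hpB_nn i) (Finset.self_mem_range_succ m)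
    have hF : 1 < ∑ j ∈ Finset.range (m+1),
        ((n.choose j:ℝ)*xA^j*(1-xA)^(n-j) + (n.choose j:ℝ)*xB^j*(1-xB)^(n-j)) := by
      rw [Finset.sum_add_distrib]
      have hs := hsplit m hmn
      linarith [htail, hfin, hFB]
    have hksm : kstar n ≤ m := by
      by_contra hc
      push_neg at hc
      linarith [hlen m hc, hF]
    calc (kstar n : ℝ) ≤ (m:ℝ) := by exact_mod_cast hksm
      _ < (L+δ)*(n:ℝ) + 1 := hmlt
  -- Lower bound : (L-δ)*n < kstar n
  have hlow : (L-δ)*(n:ℝ) < (kstar n : ℝ) := by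
    set m := ⌊(L-δ)*(n:ℝ)⌋₊ with hm_def
    have hm0 : (0:ℝ) ≤ (L-δ)*(n:ℝ) := mul_nonneg (by linarith) hn0.le
    have hmle : (m:ℝ) ≤ (L-δ)*(n:ℝ) := Nat.floor_le hm0
    have hm1r : (L-δ)*(n:ℝ) < (m:ℝ) + 1 := Nat.lt_floor_add_one _
    clear_value m
    have hmn1 : m + 1 ≤ n := by
      have h' : (m:ℝ) + 1 ≤ (n:ℝ) := by linarith [hfl]
      exact_mod_cast h'
    have hmn : m ≤ n := by omega
    have hratio2 : ∀ k, k + 1 ≤ m →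
        (n.choose k:ℝ)*xB^k*(1-xB)^(n-k)
          ≤ q2 * ((n.choose (k+1):ℝ)*xB^(k+1)*(1-xB)^(n-(k+1))) := by
      intro k hk
      have hkn : k < n := by omega
      rw [aux_step xB hxB0 h3 n k hkn]
      have hkk : (k:ℝ)+1 ≤ (m:ℝ) := by exact_mod_cast hk
      have hkey : (1-(L-δ))*((k:ℝ)+1) ≤ (L-δ)*((n:ℝ)-(k:ℝ)) := by
        linarith [hmle, hkk, hs0.le]
      have hql : 1 ≤ q2 * ((((n:ℝ)-(k:ℝ))/((k:ℝ)+1)) * (xB/(1-xB))) := by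
        rw [hq2_def, div_mul_div_comm, div_mul_div_comm, div_mul_div_comm,
          le_div_iff₀ (mul_pos (mul_pos (by linarith : (0:ℝ) < 1-(L-δ)) hxB0)
            (mul_pos (by positivity : (0:ℝ) < (k:ℝ)+1) hcB))]
        linarith [mul_le_mul_of_nonneg_right hkey (mul_pos hxB0 hcB).le]
      calc (n.choose k:ℝ)*xB^k*(1-xB)^(n-k)
          = ((n.choose k:ℝ)*xB^k*(1-xB)^(n-k)) * 1 := by ring
        _ ≤ ((n.choose k:ℝ)*xB^k*(1-xB)^(n-k))
              * (q2 * ((((n:ℝ)-(k:ℝ))/((k:ℝ)+1)) * (xB/(1-xB)))) :=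
            mul_le_mul_of_nonneg_left hql (hpB_nn k)
        _ = q2 * (((n.choose k:ℝ)*xB^k*(1-xB)^(n-k))
              * ((((n:ℝ)-(k:ℝ))/((k:ℝ)+1)) * (xB/(1-xB)))) := by ring
    have hFBle : (∑ j ∈ Finset.range (m+1), (n.choose j:ℝ)*xB^j*(1-xB)^(n-j))
        ≤ ((n.choose m:ℝ)*xB^m*(1-xB)^(n-m)) / (1-q2) := by
      have hrefl := Finset.sum_range_reflect
        (fun j => (n.choose j:ℝ)*xB^j*(1-xB)^(n-j)) (m+1)
      have hg := aux_geom (fun j => (n.choose (m-j):ℝ)*xB^(m-j)*(1-xB)^(n-(m-j)))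
        q2 hq20.le hq21 (m+1)
        (by simpa using hpB_nn m)
        (fun j hj => by
          have e : m - (j+1) + 1 = m - j := by omega
          show (n.choose (m-(j+1)):ℝ)*xB^(m-(j+1))*(1-xB)^(n-(m-(j+1)))
            ≤ q2 * ((n.choose (m-j):ℝ)*xB^(m-j)*(1-xB)^(n-(m-j)))
          rw [← e]
          exact hratio2 (m-(j+1)) (by omega))
      calc (∑ j ∈ Finset.range (m+1), (n.choose j:ℝ)*xB^j*(1-xB)^(n-j))
          = ∑ j ∈ Finset.range (m+1),
              (n.choose (m+1-1-j):ℝ)*xB^(m+1-1-j)*(1-xB)^(n-(m+1-1-j)) := hrefl.symm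
        _ = ∑ j ∈ Finset.range (m+1),
              (n.choose (m-j):ℝ)*xB^(m-j)*(1-xB)^(n-(m-j)) := by
            apply Finset.sum_congr rfl
            intro j hj
            have e : m + 1 - 1 - j = m - j := by omega
            rw [e]
        _ ≤ ((n.choose (m-0):ℝ)*xB^(m-0)*(1-xB)^(n-(m-0))) / (1-q2) := hg
        _ = ((n.choose m:ℝ)*xB^m*(1-xB)^(n-m)) / (1-q2) := by norm_num
    have htilt2 : Real.exp ((a+b)*δ*(n:ℝ)) * ((n.choose m:ℝ)*xB^m*(1-xB)^(n-m))
        ≤ (n.choose m:ℝ)*xA^m*(1-xA)^(n-m) := by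
      rw [aux_tilt xA xB h1 h2 h3 n m hmn]
      apply mul_le_mul_of_nonneg_right _ (hpB_nn m)
      rw [Real.exp_le_exp, ha_def, hb_def]
      have hLabn : L*(a+b)*(n:ℝ) = a*(n:ℝ) := by rw [hLab]
      linarith [mul_le_mul_of_nonneg_left hmle hab.le, hLabn]
    have hstep2 : c * ((n.choose m:ℝ)*xA^m*(1-xA)^(n-m))
        ≤ (n.choose (m+1):ℝ)*xA^(m+1)*(1-xA)^(n-(m+1)) := by
      rw [aux_step xA h1 hA1 n m (by omega), mul_comm c _]
      apply mul_le_mul_of_nonneg_left _ (hpA_nn m)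
      rw [hc_def]
      apply mul_le_mul_of_nonneg_right _ (div_pos h1 hcA).le
      rw [div_le_div_iff₀ (by linarith) (by positivity)]
      have hn1' : (1:ℝ) ≤ (n:ℝ) := by exact_mod_cast hn1
      linarith [hmle, mul_nonneg (by linarith : (0:ℝ) ≤ 1-(L-δ)) (by linarith : (0:ℝ) ≤ (n:ℝ)-1)]
    have hpAm1 : (n.choose (m+1):ℝ)*xA^(m+1)*(1-xA)^(n-(m+1))
        ≤ ∑ k ∈ Finset.Ico (m+1) (n+1), (n.choose k:ℝ)*xA^k*(1-xA)^(n-k) :=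
      Finset.single_le_sum (fun i _ => hpA_nn i)
        (Finset.mem_Ico.mpr ⟨le_refl _, by omega⟩)
    have hpBm := hpB_pos m hmn
    have hchain : (∑ j ∈ Finset.range (m+1), (n.choose j:ℝ)*xB^j*(1-xB)^(n-j))
        ≤ ∑ k ∈ Finset.Ico (m+1) (n+1), (n.choose k:ℝ)*xA^k*(1-xA)^(n-k) := by
      have h1' : ((n.choose m:ℝ)*xB^m*(1-xB)^(n-m)) / (1-q2)
          ≤ c * (Real.exp ((a+b)*δ*(n:ℝ)) * ((n.choose m:ℝ)*xB^m*(1-xB)^(n-m))) := by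
        have hmul := mul_le_mul_of_nonneg_right hE2 hpBm.le
        calc ((n.choose m:ℝ)*xB^m*(1-xB)^(n-m)) / (1-q2)
            = (1/(1-q2)) * ((n.choose m:ℝ)*xB^m*(1-xB)^(n-m)) := by ring
          _ ≤ (c * Real.exp ((a+b)*δ*(n:ℝ))) * ((n.choose m:ℝ)*xB^m*(1-xB)^(n-m)) := hmul
          _ = c * (Real.exp ((a+b)*δ*(n:ℝ)) * ((n.choose m:ℝ)*xB^m*(1-xB)^(n-m))) := by ring
      calc (∑ j ∈ Finset.range (m+1), (n.choose j:ℝ)*xB^j*(1-xB)^(n-j))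
          ≤ ((n.choose m:ℝ)*xB^m*(1-xB)^(n-m)) / (1-q2) := hFBle
        _ ≤ c * (Real.exp ((a+b)*δ*(n:ℝ)) * ((n.choose m:ℝ)*xB^m*(1-xB)^(n-m))) := h1'
        _ ≤ c * ((n.choose m:ℝ)*xA^m*(1-xA)^(n-m)) :=
            mul_le_mul_of_nonneg_left htilt2 hc0.le
        _ ≤ (n.choose (m+1):ℝ)*xA^(m+1)*(1-xA)^(n-(m+1)) := hstep2
        _ ≤ ∑ k ∈ Finset.Ico (m+1) (n+1), (n.choose k:ℝ)*xA^k*(1-xA)^(n-k) := hpAm1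
    have hFle : (∑ j ∈ Finset.range (m+1),
        ((n.choose j:ℝ)*xA^j*(1-xA)^(n-j) + (n.choose j:ℝ)*xB^j*(1-xB)^(n-j))) ≤ 1 := by
      rw [Finset.sum_add_distrib]
      linarith [hsplit m hmn, hchain]
    have hmk : m < kstar n := by
      by_contra hc
      push_neg at hc
      have hmono : (∑ j ∈ Finset.range (kstar n + 1),
            ((n.choose j:ℝ)*xA^j*(1-xA)^(n-j) + (n.choose j:ℝ)*xB^j*(1-xB)^(n-j)))
          ≤ ∑ j ∈ Finset.range (m+1),
            ((n.choose j:ℝ)*xA^j*(1-xA)^(n-j) + (n.choose j:ℝ)*xB^j*(1-xB)^(n-j)) :=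
        Finset.sum_le_sum_of_subset_of_nonneg (Finset.range_subset_range.mpr (by omega))
          (fun i _ _ => add_nonneg (hpA_nn i) (hpB_nn i))
      linarith [hgtn]
    have hcast : (m:ℝ)+1 ≤ (kstar n:ℝ) := by exact_mod_cast hmk
    linarith
  -- conclude
  rw [Real.dist_eq, abs_lt]
  constructor
  · have hdiv : L - δ < (kstar n:ℝ)/(n:ℝ) := by
      rw [lt_div_iff₀ hn0]
      linarith
    linarith
  · have hdiv : (kstar n:ℝ)/(n:ℝ) < L + δ + 1/(n:ℝ) := by
      rw [div_lt_iff₀ hn0]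
      have he : (L + δ + 1/(n:ℝ))*(n:ℝ) = (L+δ)*(n:ℝ) + 1 := by
        field_simp
      rw [he]
      exact hup
    linarith
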